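/- arXiv:math/0003162 — 2 statements merged into one kernel-verified Lean document; each statement's English description precedes it below -/
import Mathlib

section
/- Let s be a real constant, f(x) = ax² + bx⁴ − (x⁶−s²)/576, p(x,y) = f(x)/y² − (x³−s)/(24y) + 1/4, and Q(x,y) = (1/y²)[x f'(x)/2 − f(x) + ((x³−s)/24)²] − x³/(24y) − p(x,y)². Then on any domain with x ≠ 0 and y > 0: ∂Q/∂y = −(1/y)[2Q − 2p(p + (x³−s)/(24y) − 1/2) + x³/(24y)] and ∂Q/∂x = −(2/x)[(p − (x³−s)/(24y) + 1/2)(2p(p + (x³−s)/(24y) − 1/2) − x³/(24y)) − 2Q(1−p)]. -/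
/-- The function `f(x) = ax² + bx⁴ − (x⁶ − s²)/576`. -/
noncomputable def fAux (a b s x : ℝ) : ℝ :=
  a * x ^ 2 + b * x ^ 4 - (x ^ 6 - s ^ 2) / 576

/-- `p(x,y) = f(x)/y² − (x³ − s)/(24y) + 1/4`. -/
noncomputable def pAux (a b s x y : ℝ) : ℝ :=
  fAux a b s x / y ^ 2 - (x ^ 3 - s) / (24 * y) + 1 / 4

/-- `Q(x,y) = (1/y²)[x f'(x)/2 − f(x) + ((x³−s)/24)²] − x³/(24y) − p(x,y)²`. -/
noncomputable def QAux (a b s x y : ℝ) : ℝ :=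
  (1 / y ^ 2) * (x * deriv (fAux a b s) x / 2 - fAux a b s x + ((x ^ 3 - s) / 24) ^ 2)
    - x ^ 3 / (24 * y) - (pAux a b s x y) ^ 2

lemma fAux_hasDerivAt (a b s t : ℝ) :
    HasDerivAt (fAux a b s) (2 * a * t + 4 * b * t ^ 3 - 6 * t ^ 5 / 576) t := by
  have h2 : HasDerivAt (fun u : ℝ => u ^ 2) ((2 : ℕ) * t ^ 1) t := hasDerivAt_pow 2 t
  have h4 : HasDerivAt (fun u : ℝ => u ^ 4) ((4 : ℕ) * t ^ 3) t := hasDerivAt_pow 4 t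
  have h6 : HasDerivAt (fun u : ℝ => u ^ 6) ((6 : ℕ) * t ^ 5) t := hasDerivAt_pow 6 t
  have h := ((h2.const_mul a).add (h4.const_mul b)).sub
    ((h6.sub_const (s ^ 2)).div_const 576)
  have : HasDerivAt (fAux a b s)
      (a * ((2 : ℕ) * t ^ 1) + b * ((4 : ℕ) * t ^ 3) - (6 : ℕ) * t ^ 5 / 576) t := h
  convert this using 1
  push_cast
  ring

lemma fAux_deriv (a b s t : ℝ) :
    deriv (fAux a b s) t = 2 * a * t + 4 * b * t ^ 3 - 6 * t ^ 5 / 576 :=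
  (fAux_hasDerivAt a b s t).deriv

set_option maxHeartbeats 2000000 in
/-- the explicit pair `(p, Q)` satisfies the two displayed first-order
PDEs for the partial derivatives of `Q` on any domain with `x ≠ 0`, `y > 0`. -/
theorem stmt5 (a b s x y : ℝ) (hx : x ≠ 0) (hy : 0 < y) :
    deriv (fun y' => QAux a b s x y') y =
      -(1 / y) * (2 * QAux a b s x y
        - 2 * pAux a b s x y * (pAux a b s x y + (x ^ 3 - s) / (24 * y) - 1 / 2)
        + x ^ 3 / (24 * y)) ∧
    deriv (fun x' => QAux a b s x' y) x =
      -(2 / x) * ((pAux a b s x y - (x ^ 3 - s) / (24 * y) + 1 / 2)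
          * (2 * pAux a b s x y * (pAux a b s x y + (x ^ 3 - s) / (24 * y) - 1 / 2)
              - x ^ 3 / (24 * y))
        - 2 * QAux a b s x y * (1 - pAux a b s x y)) := by
  have hy0 : y ≠ 0 := ne_of_gt hy
  have h24y : (24 : ℝ) * y ≠ 0 := by positivity
  have hy2 : y ^ 2 ≠ 0 := pow_ne_zero 2 hy0
  constructor
  · -- y-derivative
    have hp2 : HasDerivAt (fun t : ℝ => t ^ 2) ((2 : ℕ) * y ^ 1) y := hasDerivAt_pow 2 y
    have hden : HasDerivAt (fun t : ℝ => 24 * t) 24 y := by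
      simpa using (hasDerivAt_id y).const_mul (24 : ℝ)
    have hA : HasDerivAt (fun t : ℝ => 1 / t ^ 2 *
        (x * deriv (fAux a b s) x / 2 - fAux a b s x + ((x ^ 3 - s) / 24) ^ 2)) _ y :=
      ((hasDerivAt_const y (1 : ℝ)).div hp2 hy2).mul_const _
    have hB : HasDerivAt (fun t : ℝ => x ^ 3 / (24 * t)) _ y :=
      (hasDerivAt_const y (x ^ 3)).div hden h24y
    have hP : HasDerivAt (fun t : ℝ =>
        fAux a b s x / t ^ 2 - (x ^ 3 - s) / (24 * t) + 1 / 4) _ y :=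
      (((hasDerivAt_const y (fAux a b s x)).div hp2 hy2).sub
        ((hasDerivAt_const y (x ^ 3 - s)).div hden h24y)).add_const _
    have hQ : HasDerivAt (fun t : ℝ => 1 / t ^ 2 *
        (x * deriv (fAux a b s) x / 2 - fAux a b s x + ((x ^ 3 - s) / 24) ^ 2)
        - x ^ 3 / (24 * t)
        - (fAux a b s x / t ^ 2 - (x ^ 3 - s) / (24 * t) + 1 / 4) ^ 2) _ y :=
      (hA.sub hB).sub (hP.pow 2)
    have heq : (fun y' => QAux a b s x y') = (fun t : ℝ => 1 / t ^ 2 *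
        (x * deriv (fAux a b s) x / 2 - fAux a b s x + ((x ^ 3 - s) / 24) ^ 2)
        - x ^ 3 / (24 * t)
        - (fAux a b s x / t ^ 2 - (x ^ 3 - s) / (24 * t) + 1 / 4) ^ 2) := by
      funext t
      simp [QAux, pAux]
    rw [heq, hQ.deriv]
    simp only [QAux, pAux]
    field_simp
    ring_nf
    field_simp
    ring
  · -- x-derivative
    have heq : (fun x' => QAux a b s x' y) = (fun t : ℝ => 1 / y ^ 2 *
        (t * (2 * a * t + 4 * b * t ^ 3 - 6 * t ^ 5 / 576) / 2
          - (a * t ^ 2 + b * t ^ 4 - (t ^ 6 - s ^ 2) / 576) + ((t ^ 3 - s) / 24) ^ 2)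
        - t ^ 3 / (24 * y)
        - ((a * t ^ 2 + b * t ^ 4 - (t ^ 6 - s ^ 2) / 576) / y ^ 2
            - (t ^ 3 - s) / (24 * y) + 1 / 4) ^ 2) := by
      funext t
      simp only [QAux, pAux, fAux, fAux_deriv]
    have h2 : HasDerivAt (fun u : ℝ => u ^ 2) ((2 : ℕ) * x ^ 1) x := hasDerivAt_pow 2 x
    have h3 : HasDerivAt (fun u : ℝ => u ^ 3) ((3 : ℕ) * x ^ 2) x := hasDerivAt_pow 3 x
    have h4 : HasDerivAt (fun u : ℝ => u ^ 4) ((4 : ℕ) * x ^ 3) x := hasDerivAt_pow 4 x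
    have h5 : HasDerivAt (fun u : ℝ => u ^ 5) ((5 : ℕ) * x ^ 4) x := hasDerivAt_pow 5 x
    have h6 : HasDerivAt (fun u : ℝ => u ^ 6) ((6 : ℕ) * x ^ 5) x := hasDerivAt_pow 6 x
    have hfp : HasDerivAt (fun t : ℝ => 2 * a * t + 4 * b * t ^ 3 - 6 * t ^ 5 / 576) _ x :=
      (((hasDerivAt_id x).const_mul (2 * a)).add (h3.const_mul (4 * b))).sub
        ((h5.const_mul 6).div_const 576)
    have hf : HasDerivAt (fun t : ℝ => a * t ^ 2 + b * t ^ 4 - (t ^ 6 - s ^ 2) / 576) _ x :=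
      ((h2.const_mul a).add (h4.const_mul b)).sub ((h6.sub_const (s ^ 2)).div_const 576)
    have hG : HasDerivAt (fun t : ℝ =>
        t * (2 * a * t + 4 * b * t ^ 3 - 6 * t ^ 5 / 576) / 2
          - (a * t ^ 2 + b * t ^ 4 - (t ^ 6 - s ^ 2) / 576) + ((t ^ 3 - s) / 24) ^ 2) _ x :=
      ((((hasDerivAt_id x).mul hfp).div_const 2).sub hf).add
        (((h3.sub_const s).div_const 24).pow 2)
    have hP : HasDerivAt (fun t : ℝ =>
        (a * t ^ 2 + b * t ^ 4 - (t ^ 6 - s ^ 2) / 576) / y ^ 2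
          - (t ^ 3 - s) / (24 * y) + 1 / 4) _ x :=
      ((hf.div_const (y ^ 2)).sub ((h3.sub_const s).div_const (24 * y))).add_const _
    have hQ : HasDerivAt (fun t : ℝ => 1 / y ^ 2 *
        (t * (2 * a * t + 4 * b * t ^ 3 - 6 * t ^ 5 / 576) / 2
          - (a * t ^ 2 + b * t ^ 4 - (t ^ 6 - s ^ 2) / 576) + ((t ^ 3 - s) / 24) ^ 2)
        - t ^ 3 / (24 * y)
        - ((a * t ^ 2 + b * t ^ 4 - (t ^ 6 - s ^ 2) / 576) / y ^ 2
            - (t ^ 3 - s) / (24 * y) + 1 / 4) ^ 2) _ x :=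
      ((hG.const_mul (1 / y ^ 2)).sub (h3.div_const (24 * y))).sub (hP.pow 2)
    rw [heq, hQ.deriv]
    simp only [QAux, pAux, fAux, fAux_deriv, id]
    field_simp
    ring_nf
    field_simp
    ring
end

section
/- Let J₁ and J₂ be two orthogonal complex structures on a 4-dimensional inner product space V (i.e. isometries with J² = −Id), and set p = −(1/4)tr(J₁ ∘ J₂). Then J₁ ∘ J₂ + J₂ ∘ J₁ = −2p · Id, provided J₁ and J₂ are both compatible with the same orientation (i.e. both are self-dual). -/
open Matrix
/-- A skew-symmetric `4×4` real matrix is *self-dual* (its associated 2-form on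
oriented Euclidean `ℝ⁴` lies in the `+1`-eigenspace of the Hodge star) iff
`A₀₁ = A₂₃`, `A₀₂ = A₃₁`, `A₀₃ = A₁₂`. -/
def SelfDualSkew (A : Matrix (Fin 4) (Fin 4) ℝ) : Prop :=
  Aᵀ = -A ∧ A 0 1 = A 2 3 ∧ A 0 2 = A 3 1 ∧ A 0 3 = A 1 2

lemma selfDualSkew_form (A : Matrix (Fin 4) (Fin 4) ℝ) (h : SelfDualSkew A) :
    A = !![0, A 0 1, A 0 2, A 0 3;
           -(A 0 1), 0, A 0 3, -(A 0 2);
           -(A 0 2), -(A 0 3), 0, A 0 1;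
           -(A 0 3), A 0 2, -(A 0 1), 0] := by
  obtain ⟨hsk, h1, h2, h3⟩ := h
  have key : ∀ i j, A j i = -A i j := fun i j => by
    have := congrFun (congrFun hsk i) j
    simpa [transpose_apply] using this
  have diag : ∀ i, A i i = 0 := fun i => by
    have := key i i; linarith
  ext i j
  fin_cases i <;> fin_cases j <;>
    simp [diag, key 0 1, key 0 2, key 0 3, key 1 2, key 1 3, key 2 3, h1, h2, h3]


set_option maxHeartbeats 2000000 in
lemma anticomm_key (a b c a' b' c' : ℝ) :
    (!![0, a, b, c; -a, 0, c, -b; -b, -c, 0, a; -c, b, -a, 0] *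
       !![(0:ℝ), a', b', c'; -a', 0, c', -b'; -b', -c', 0, a'; -c', b', -a', 0]) +
      (!![0, a', b', c'; -a', 0, c', -b'; -b', -c', 0, a'; -c', b', -a', 0] *
       !![(0:ℝ), a, b, c; -a, 0, c, -b; -b, -c, 0, a; -c, b, -a, 0]) =
    (-2 * (-(1 / 4) *
      Matrix.trace (!![0, a, b, c; -a, 0, c, -b; -b, -c, 0, a; -c, b, -a, 0] *
        !![(0:ℝ), a', b', c'; -a', 0, c', -b'; -b', -c', 0, a'; -c', b', -a', 0]))) •
      (1 : Matrix (Fin 4) (Fin 4) ℝ) := by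
  have ht : Matrix.trace (!![0, a, b, c; -a, 0, c, -b; -b, -c, 0, a; -c, b, -a, 0] *
      !![(0:ℝ), a', b', c'; -a', 0, c', -b'; -b', -c', 0, a'; -c', b', -a', 0]) =
      -4 * (a * a' + b * b' + c * c') := by
    simp [Matrix.trace, Matrix.diag, Matrix.mul_apply, Fin.sum_univ_four]
    ring
  rw [ht]
  ext i j
  fin_cases i <;> fin_cases j <;>
    simp [Matrix.mul_apply, Fin.sum_univ_four, Matrix.one_apply] <;> ring

/-- if `J₁, J₂` are two orthogonal complex structures on oriented
Euclidean `ℝ⁴`, both self-dual, and `p = −(1/4) tr(J₁J₂)`, then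
`J₁J₂ + J₂J₁ = −2p·Id`. -/
theorem stmt9 (J₁ J₂ : Matrix (Fin 4) (Fin 4) ℝ)
    (h₁o : J₁ᵀ * J₁ = 1) (h₂o : J₂ᵀ * J₂ = 1)
    (h₁sq : J₁ * J₁ = -1) (h₂sq : J₂ * J₂ = -1)
    (h₁sd : SelfDualSkew J₁) (h₂sd : SelfDualSkew J₂) :
    J₁ * J₂ + J₂ * J₁ =
      (-2 * (-(1 / 4) * Matrix.trace (J₁ * J₂))) • (1 : Matrix (Fin 4) (Fin 4) ℝ) := by
  rw [selfDualSkew_form J₁ h₁sd, selfDualSkew_form J₂ h₂sd]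
  exact anticomm_key _ _ _ _ _ _
end
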